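/- Unraveling property: if a DPL formula φ is satisfied at world w of a DPL structure M, then there exists a DPL structure M' whose underlying labeled graph is a tree rooted at a world w' (no cycles, unique path from the root to each world), such that w', M' ⊨ φ. -/

import Mathlib

/-- Boolean action terms over a set `A` of primitive actions. -/
inductive ActTerm (A : Type) : Type
  | prim  : A → ActTerm A
  | meet  : ActTerm A → ActTerm A → ActTerm A
  | join  : ActTerm A → ActTerm A → ActTerm A
  | compl : ActTerm A → ActTerm A
  | empty : ActTerm A
  | univ  : ActTerm A

/-- Formulae of the deontic action logic DPL over primitive actions `A`
    and propositional variables `P`. -/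
inductive Form (A P : Type) : Type
  | prop  : P → Form A P
  | neg   : Form A P → Form A P
  | imp   : Form A P → Form A P → Form A P
  | box   : ActTerm A → Form A P → Form A P
  | sperm : ActTerm A → Form A P            -- strong permission P(α)
  | wperm : ActTerm A → Form A P            -- weak permission Pw(α)
  | eq    : ActTerm A → ActTerm A → Form A P

/-- Diamond `⟨α⟩φ := ¬[α]¬φ`. -/
def Form.dia {A P : Type} (α : ActTerm A) (φ : Form A P) : Form A P :=
  .neg (.box α (.neg φ))

/-- Conjunction. -/
def Form.and {A P : Type} (φ ψ : Form A P) : Form A P := .neg (.imp φ (.neg ψ))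

/-- Disjunction. -/
def Form.or {A P : Type} (φ ψ : Form A P) : Form A P := .imp (.neg φ) ψ

/-- Biconditional. -/
def Form.iff {A P : Type} (φ ψ : Form A P) : Form A P := (φ.imp ψ).and (ψ.imp φ)

/-- DPL structures over the vocabulary `⟨A, P⟩` (def. 1 of the paper):
worlds, events, a deterministic event-labeled transition relation,
a permission relation and an interpretation satisfying I.1, I.2, I.3. -/
structure DPLStruct (A P : Type) where
  W : Type
  E : Type
  nonemptyE : Nonempty E
  R : W → W → E → Prop
  det : ∀ w w' w'' e, R w w' e → R w w'' e → w' = w''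
  Perm : W → E → Prop
  Iprop : P → Set W
  Iact : A → Set E
  I1 : ∀ a : A, (Iact a \ ⋃ (b : A) (_ : b ≠ a), Iact b).Subsingleton
  I2 : ∀ (e : E) (a b : A), a ≠ b → e ∈ Iact a → e ∈ Iact b →
        (⋂ (c : A) (_ : e ∈ Iact c), Iact c) = {e}
  I3 : (⋃ a : A, Iact a) = Set.univ

/-- Interpretation of action terms as sets of events. -/
def ActTerm.interp {A P : Type} (M : DPLStruct A P) : ActTerm A → Set M.E
  | .prim a => M.Iact a
  | .meet α β => α.interp M ∩ β.interp M
  | .join α β => α.interp M ∪ β.interp M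
  | .compl α => (α.interp M)ᶜ
  | .empty => ∅
  | .univ => Set.univ

/-- Satisfaction of DPL formulae at a world of a structure. -/
def Sat {A P : Type} (M : DPLStruct A P) : M.W → Form A P → Prop
  | w, .prop p => w ∈ M.Iprop p
  | w, .neg φ => ¬ Sat M w φ
  | w, .imp φ ψ => Sat M w φ → Sat M w ψ
  | w, .box α φ => ∀ e ∈ α.interp M, ∀ w', M.R w w' e → Sat M w' φ
  | w, .sperm α => ∀ e ∈ α.interp M, M.Perm w e
  | w, .wperm α => ∃ e ∈ α.interp M, M.Perm w e
  | w, .eq α β => α.interp M = β.interp M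

/-- Finite labeled paths: `ReachPath M w v l` means `l` is a path of
labeled transitions from `w` to `v` in `M`. -/
inductive ReachPath {A P : Type} (M : DPLStruct A P) : M.W → M.W → List (M.E × M.W) → Prop
  | nil (w : M.W) : ReachPath M w w []
  | cons {w v u : M.W} {e : M.E} {l : List (M.E × M.W)} :
      M.R w v e → ReachPath M v u l → ReachPath M w u ((e, v) :: l)

/-- `M` is a tree rooted at `r`: every world is reached from `r` by a
unique finite path (hence there are no cycles). -/
def IsTreeRooted {A P : Type} (M : DPLStruct A P) (r : M.W) : Prop :=
  ∀ v : M.W, ∃! l : List (M.E × M.W), ReachPath M r v l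

namespace Unravel

variable {A P : Type} (M : DPLStruct A P) (w : M.W)

/-- End world of a finite path record starting at `w`. -/
def endW (l : List (M.E × M.W)) : M.W := (l.getLast?.map Prod.snd).getD w

@[simp] lemma endW_nil : endW M w ([] : List (M.E × M.W)) = w := rfl

@[simp] lemma endW_concat (l : List (M.E × M.W)) (e : M.E) (v : M.W) :
    endW M w (l ++ [(e, v)]) = v := by
  simp [endW, List.getLast?_concat]

lemma reach_snoc {u v v' : M.W} {e : M.E} {l : List (M.E × M.W)}
    (h : ReachPath M u v l) (h' : M.R v v' e) :
    ReachPath M u v' (l ++ [(e, v')]) := by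
  induction h with
  | nil => exact ReachPath.cons h' (ReachPath.nil _)
  | cons hr _ ih => exact ReachPath.cons hr (ih h')

/-- Worlds of the unraveled structure: finite paths from `w`. -/
def UW := {l : List (M.E × M.W) // ReachPath M w (endW M w l) l}

/-- The unraveled structure. -/
def unravel : DPLStruct A P where
  W := UW M w
  E := M.E
  nonemptyE := M.nonemptyE
  R := fun x y e => ∃ v, M.R (endW M w x.val) v e ∧ y.val = x.val ++ [(e, v)]
  det := by
    rintro x y z e ⟨v1, h1, hy⟩ ⟨v2, h2, hz⟩
    obtain rfl := M.det _ _ _ _ h1 h2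
    exact Subtype.ext (hy.trans hz.symm)
  Perm := fun x e => M.Perm (endW M w x.val) e
  Iprop := fun p => {x | endW M w x.val ∈ M.Iprop p}
  Iact := M.Iact
  I1 := M.I1
  I2 := M.I2
  I3 := M.I3

lemma interp_unravel (α : ActTerm A) : α.interp (unravel M w) = α.interp M := by
  induction α with
  | prim a => rfl
  | meet α β ih1 ih2 => simp only [ActTerm.interp, ih1, ih2]; rfl
  | join α β ih1 ih2 => simp only [ActTerm.interp, ih1, ih2]; rfl
  | compl α ih => simp only [ActTerm.interp, ih]; rfl
  | empty => rfl
  | univ => rfl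

/-- The root of the unraveled structure. -/
def root : (unravel M w).W := ⟨[], ReachPath.nil w⟩

lemma step {x : (unravel M w).W} {v : M.W} {e : M.E}
    (h : M.R (endW M w x.val) v e) :
    ReachPath M w (endW M w (x.val ++ [(e, v)])) (x.val ++ [(e, v)]) := by
  rw [endW_concat]
  exact reach_snoc M x.property h

lemma sat_unravel : ∀ (φ : Form A P) (x : (unravel M w).W),
    Sat (unravel M w) x φ ↔ Sat M (endW M w x.val) φ := by
  intro φ
  induction φ with
  | prop p => intro x; exact Iff.rfl
  | neg φ ih => intro x; exact not_congr (ih x)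
  | imp φ ψ ih1 ih2 => intro x; exact imp_congr (ih1 x) (ih2 x)
  | box α φ ih =>
      intro x
      constructor
      · intro hs e he v hv
        have he' : e ∈ α.interp (unravel M w) := by rwa [interp_unravel]
        have hx' : (unravel M w).R x ⟨x.val ++ [(e, v)], step M w hv⟩ e :=
          ⟨v, hv, rfl⟩
        have := hs e he' _ hx'
        have h3 : Sat M (endW M w (x.val ++ [(e, v)])) φ := (ih _).1 this
        rwa [endW_concat] at h3
      · intro hs e he y hy
        obtain ⟨v, hv, hyv⟩ := hy
        have he' : e ∈ α.interp M := by rwa [interp_unravel] at he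
        rw [ih]
        have : endW M w y.val = v := by rw [hyv]; exact endW_concat M w _ e v
        rw [this]
        exact hs e he' v hv
  | sperm α =>
      intro x
      constructor
      · intro hs e he
        exact hs e (by rwa [interp_unravel])
      · intro hs e he
        exact hs e (by rwa [interp_unravel] at he)
  | wperm α =>
      intro x
      constructor
      · rintro ⟨e, he, hp⟩
        exact ⟨e, by rwa [interp_unravel] at he, hp⟩
      · rintro ⟨e, he, hp⟩
        exact ⟨e, by rwa [interp_unravel], hp⟩
  | eq α β =>
      intro x
      show α.interp (unravel M w) = β.interp (unravel M w) ↔ _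
      rw [interp_unravel, interp_unravel]
      exact Iff.rfl

lemma reach_prefix {x y : (unravel M w).W} {p : List ((unravel M w).E × (unravel M w).W)}
    (h : ReachPath (unravel M w) x y p) : x.val <+: y.val := by
  induction h with
  | nil => exact List.prefix_rfl
  | cons hr _ ih =>
      obtain ⟨v, _, hv⟩ := hr
      refine List.IsPrefix.trans ?_ ih
      rw [hv]
      exact ⟨_, rfl⟩

lemma reach_length {x y : (unravel M w).W} {p : List ((unravel M w).E × (unravel M w).W)}
    (h : ReachPath (unravel M w) x y p) :
    y.val.length = x.val.length + p.length := by
  induction h with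
  | nil => simp
  | cons hr _ ih =>
      obtain ⟨v, _, hv⟩ := hr
      rw [ih, hv]
      simp
      omega

lemma reach_unique {x y : (unravel M w).W} {p : List ((unravel M w).E × (unravel M w).W)}
    (hp : ReachPath (unravel M w) x y p) :
    ∀ q, ReachPath (unravel M w) x y q → p = q := by
  induction hp with
  | nil =>
      intro q hq
      have := reach_length M w hq
      exact (List.eq_nil_of_length_eq_zero (by omega)).symm
  | cons hr1 hp' ih =>
      rename_i x u y e l
      intro q hq
      cases hq with
      | nil =>
          have h1 := reach_length M w hp'
          obtain ⟨v, _, hv⟩ := hr1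
          have h2 : u.val.length = x.val.length + 1 := by rw [hv]; simp
          omega
      | cons hr2 hq' =>
          rename_i u' e' q'
          obtain ⟨v1, _, hv1⟩ := hr1
          obtain ⟨v2, _, hv2⟩ := hr2
          have hpre1 : u.val <+: y.val := reach_prefix M w hp'
          have hpre2 : u'.val <+: y.val := reach_prefix M w hq'
          have hlen : u.val.length = u'.val.length := by
            rw [hv1, hv2]; simp
          have huu' : u.val = u'.val := by
            rcases List.prefix_or_prefix_of_prefix hpre1 hpre2 with h | h
            · exact h.eq_of_length hlen
            · exact (h.eq_of_length hlen.symm).symm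
          have heq : ((e, v1) : M.E × M.W) = (e', v2) := by
            have key : x.val ++ ([(e, v1)] : List (M.E × M.W)) =
                x.val ++ ([(e', v2)] : List (M.E × M.W)) := by
              rw [← hv1, ← hv2, huu']
            exact (List.cons.inj (List.append_cancel_left key)).1
          have he : e = e' := congrArg Prod.fst heq
          have hu : u = u' := Subtype.ext huu'
          subst he hu
          rw [ih _ hq']

lemma reach_exists : ∀ {u v : M.W} (l : List (M.E × M.W)),
    ReachPath M u v l → ∀ x : (unravel M w).W, endW M w x.val = u →
    ∃ (y : (unravel M w).W) (p : List ((unravel M w).E × (unravel M w).W)),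
      y.val = x.val ++ l ∧ ReachPath (unravel M w) x y p := by
  intro u v l h
  induction h with
  | nil u => exact fun x hx => ⟨x, [], by simp, ReachPath.nil x⟩
  | cons hr hl ih =>
      rename_i a b c e l'
      intro x hx
      have hr' : M.R (endW M w x.val) b e := hx ▸ hr
      set x' : (unravel M w).W := ⟨x.val ++ [(e, b)], step M w hr'⟩ with hx'
      have hend : endW M w x'.val = b := by simp [hx']
      obtain ⟨y, p, hy, hp⟩ := ih x' hend
      refine ⟨y, (e, x') :: p, ?_, ReachPath.cons ⟨b, hr', rfl⟩ hp⟩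
      rw [hy, hx']
      simp

end Unravel

/-- Unraveling property: any satisfiable DPL formula is satisfiable at the
root of a tree-shaped DPL structure. -/
theorem unraveling {A P : Type} (M : DPLStruct A P) (w : M.W) (φ : Form A P)
    (h : Sat M w φ) :
    ∃ (M' : DPLStruct A P) (w' : M'.W), IsTreeRooted M' w' ∧ Sat M' w' φ := by
  refine ⟨Unravel.unravel M w, Unravel.root M w, ?_, ?_⟩
  · intro v
    obtain ⟨y, p, hy, hp⟩ :=
      Unravel.reach_exists M w v.val v.property (Unravel.root M w) rfl
    have hyv : y = v := Subtype.ext (by simpa [Unravel.root] using hy)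
    subst hyv
    exact ⟨p, hp, fun q hq => (Unravel.reach_unique M w hp q hq).symm⟩
  · rw [Unravel.sat_unravel]
    simpa [Unravel.root] using h
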